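/- Let γ = (γ₀, γ₁)σ be an automorphism of the binary tree acting nontrivially on level one, with sections γ₀, γ₁. Then an automorphism β = (β₀, β₁)σ (also acting nontrivially on level one) is conjugate to γ in Ω if and only if β₀β₁ is conjugate to γ₀γ₁ in Ω. -/

import Mathlib

namespace BinTree

/-- Vertices of the infinite rooted binary tree: finite words over `{0,1}`. -/
abbrev Vertex : Type := List Bool

/-- A function on vertices is a tree automorphism function if it preserves lengths
(levels) and prefixes. -/
def IsTreeAutFun (f : Vertex → Vertex) : Prop :=
  (∀ v, (f v).length = v.length) ∧ ∀ v w : Vertex, (f (v ++ w)).take v.length = f v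

/-- `Ω`: the automorphism group of the infinite rooted binary tree, realized as the
subgroup of permutations of the set of vertices preserving the tree structure. -/
def TreeAut : Subgroup (Equiv.Perm Vertex) where
  carrier := {e | IsTreeAutFun ⇑e}
  one_mem' := ⟨fun _ => rfl, fun v w => by
    simpa using List.take_left (l₁ := v) (l₂ := w)⟩
  mul_mem' := by
    rintro a b ha hb
    obtain ⟨ha1, ha2⟩ := ha
    obtain ⟨hb1, hb2⟩ := hb
    refine ⟨fun v => ?_, fun v w => ?_⟩
    · simp [Equiv.Perm.mul_apply, ha1, hb1]
    · have hb' : b (v ++ w) = b v ++ (b (v ++ w)).drop v.length := by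
        conv_lhs => rw [← List.take_append_drop v.length (b (v ++ w)), hb2]
      have hlen : (b v).length = v.length := hb1 v
      calc ((a * b) (v ++ w)).take v.length
          = (a (b v ++ (b (v ++ w)).drop v.length)).take v.length := by
            rw [Equiv.Perm.mul_apply, ← hb']
        _ = a (b v) := by rw [← hlen]; exact ha2 _ _
        _ = (a * b) v := rfl
  inv_mem' := by
    intro a ha
    obtain ⟨ha1, ha2⟩ := ha
    show IsTreeAutFun ⇑a⁻¹
    have hlen : ∀ v : Vertex, (a⁻¹ v).length = v.length := by
      intro v
      have h := ha1 (a⁻¹ v)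
      rw [Equiv.Perm.eq_inv_iff_eq.mp rfl] at h
      exact h.symm ▸ rfl
    refine ⟨hlen, fun v w => ?_⟩
    have htl : ((a⁻¹ (v ++ w)).take v.length).length = v.length := by
      rw [List.length_take, hlen, List.length_append]
      omega
    have key : a ((a⁻¹ (v ++ w)).take v.length) = v := by
      have h2 := ha2 ((a⁻¹ (v ++ w)).take v.length) ((a⁻¹ (v ++ w)).drop v.length)
      rw [List.take_append_drop, htl, Equiv.Perm.eq_inv_iff_eq.mp rfl] at h2
      rw [← h2]
      simpa using List.take_left (l₁ := v) (l₂ := w)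
    have h3 := congrArg (⇑a⁻¹) key
    rwa [Equiv.Perm.inv_eq_iff_eq.mpr rfl] at h3

/-- wreath recursion, forward map: `(g,h)σᵗ` -/
def wrFun (g h : Vertex → Vertex) (t : Bool) : Vertex → Vertex
  | [] => []
  | x :: v => (xor x t) :: (cond x (h v) (g v))

/-- wreath recursion, inverse map -/
def wrFunInv (g h : Vertex → Vertex) (t : Bool) : Vertex → Vertex
  | [] => []
  | y :: w => (xor y t) :: (cond (xor y t) (h w) (g w))

/-- `(g,h)σᵗ` as a permutation of the vertices. -/
def wrPerm (g h : Equiv.Perm Vertex) (t : Bool) : Equiv.Perm Vertex where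
  toFun := wrFun ⇑g ⇑h t
  invFun := wrFunInv ⇑g.symm ⇑h.symm t
  left_inv := by
    intro v
    cases v with
    | nil => rfl
    | cons x v => cases x <;> cases t <;> simp [wrFun, wrFunInv]
  right_inv := by
    intro v
    cases v with
    | nil => rfl
    | cons x v => cases x <;> cases t <;> simp [wrFun, wrFunInv]

/-- The element `(g,h)σᵗ` of `Ω`: acts on the first level by `σᵗ` (where `σ` is the
swap of the two level-one subtrees), with section `g` at the vertex `0` and section
`h` at the vertex `1`.  Thus `(γ₀,γ₁)τ` of the wreath recursion
`Ω ≃ (Ω × Ω) ⋊ S₂` is `wr γ₀ γ₁ t` (`t = true` iff `τ = σ`). -/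
def wr (g h : TreeAut) (t : Bool) : TreeAut :=
  ⟨wrPerm g.1 h.1 t, by
    have hg : IsTreeAutFun ⇑g.1 := g.2
    have hh : IsTreeAutFun ⇑h.1 := h.2
    constructor
    · intro v
      cases v with
      | nil => rfl
      | cons x v =>
        cases x <;> simp [wrPerm, wrFun, hg.1, hh.1]
    · intro v w
      cases v with
      | nil => simp [wrPerm, wrFun]
      | cons x v =>
        cases x <;> simp [wrPerm, wrFun, hg.2, hh.2]⟩

/-- Application of a tree automorphism to a vertex. -/
def ap (γ : TreeAut) (v : Vertex) : Vertex := γ.1 v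

/-- The permutation induced by `γ ∈ Ω` on level `n` of the tree. -/
def levelPerm (n : ℕ) (γ : TreeAut) : Equiv.Perm (List.Vector Bool n) where
  toFun v := ⟨γ.1 v.1, by
    have h : IsTreeAutFun ⇑γ.1 := γ.2
    rw [h.1 v.1]; exact v.2⟩
  invFun v := ⟨γ.1.symm v.1, by
    have h : IsTreeAutFun ⇑γ.1 := γ.2
    have h2 := h.1 (γ.1.symm v.1)
    rw [Equiv.apply_symm_apply] at h2
    exact h2.symm.trans v.2⟩
  left_inv v := Subtype.ext (Equiv.symm_apply_apply _ _)
  right_inv v := Subtype.ext (Equiv.apply_symm_apply _ _)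

/-- Restriction to level `n` as a group homomorphism. -/
def levelHom (n : ℕ) : TreeAut →* Equiv.Perm (List.Vector Bool n) where
  toFun := levelPerm n
  map_one' := Equiv.ext fun v => Subtype.ext rfl
  map_mul' := fun g h => Equiv.ext fun v => Subtype.ext rfl

/-- `sgn_n`: the sign of the permutation induced on level `n`. -/
def sgn (n : ℕ) (γ : TreeAut) : ℤˣ := Equiv.Perm.sign (levelPerm n γ)

/-- An odometer: acts as a single `2^n`-cycle on each level `n ≥ 1`. -/
def IsOdometer (γ : TreeAut) : Prop :=
  ∀ n : ℕ, 1 ≤ n → (levelPerm n γ).IsCycle ∧ (levelPerm n γ).support = Finset.univ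

/-- The profinite topology on `Ω`: the coarsest topology making all level
restrictions (to the discrete finite groups) continuous. -/
instance : TopologicalSpace TreeAut :=
  ⨅ n : ℕ, TopologicalSpace.induced (levelPerm n) ⊥

/-- A vertex `w` is in a stable cycle of `γ` of length `k`: its `γ`-orbit has exactly
`k` elements, and for every level `m` above the level of `w`, all level-`m` vertices
lying above this orbit are in one single `γ`-cycle (necessarily of length
`2^(m - n) * k`, which we record via the periodicity condition). -/
def InStableCycle (γ : TreeAut) (w : Vertex) (k : ℕ) : Prop :=
  0 < k ∧ ap (γ ^ k) w = w ∧ (∀ j : ℕ, 0 < j → j < k → ap (γ ^ j) w ≠ w) ∧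
  (∀ u : Vertex, w.length < u.length → (∃ i : ℕ, u.take w.length = ap (γ ^ i) w) →
    (ap (γ ^ (2 ^ (u.length - w.length) * k)) u = u ∧
      ∀ u' : Vertex, u'.length = u.length →
        (∃ i : ℕ, u'.take w.length = ap (γ ^ i) w) → ∃ j : ℕ, ap (γ ^ j) u = u'))

/-- Self-similar subgroup: closed under taking sections (here the section of `γ` at
the first-level vertex `x` is characterized by `(xv)γ = (x)γ ⬝ (v)γₓ`). -/
def SelfSimilar (H : Subgroup TreeAut) : Prop :=
  ∀ γ ∈ H, ∀ x : Bool, ∀ δ : TreeAut,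
    (∀ v : Vertex, ap γ (x :: v) = ap γ [x] ++ ap δ v) → δ ∈ H



section Decomp

lemma treeAut_fun (ζ : TreeAut) : IsTreeAutFun ⇑ζ.1 := ζ.2

lemma treeAut_len (ζ : TreeAut) (v : Vertex) : (ζ.1 v).length = v.length :=
  (treeAut_fun ζ).1 v

lemma treeAut_nil (ζ : TreeAut) : ζ.1 [] = [] :=
  List.length_eq_zero_iff.mp ((treeAut_fun ζ).1 [])

lemma treeAut_symm_fun (ζ : TreeAut) : IsTreeAutFun ⇑ζ.1.symm := (ζ⁻¹ : TreeAut).2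

lemma treeAut_take (ζ : TreeAut) (x : Bool) (v : Vertex) :
    (ζ.1 (x :: v)).take 1 = ζ.1 [x] := by
  have h := (treeAut_fun ζ).2 [x] v
  simpa using h

/-- The section of a tree automorphism at a first-level vertex, as a permutation. -/
def sec (ζ : TreeAut) (x : Bool) : Equiv.Perm Vertex where
  toFun v := (ζ.1 (x :: v)).tail
  invFun w := (ζ.1.symm (ζ.1 [x] ++ w)).tail
  left_inv := by
    intro v
    have h : ζ.1 [x] ++ (ζ.1 (x :: v)).tail = ζ.1 (x :: v) := by
      conv_rhs => rw [← List.take_append_drop 1 (ζ.1 (x :: v))]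
      rw [treeAut_take, List.drop_one]
    simp only [h, Equiv.symm_apply_apply, List.tail_cons]
  right_inv := by
    intro w
    have hlen1 : (ζ.1 [x]).length = 1 := treeAut_len ζ [x]
    have h1 : (ζ.1.symm (ζ.1 [x] ++ w)).take 1 = [x] := by
      have h := (treeAut_symm_fun ζ).2 (ζ.1 [x]) w
      rw [hlen1] at h
      rw [h, Equiv.symm_apply_apply]
    have h2 : ζ.1.symm (ζ.1 [x] ++ w) = x :: (ζ.1.symm (ζ.1 [x] ++ w)).tail := by
      conv_lhs => rw [← List.take_append_drop 1 (ζ.1.symm (ζ.1 [x] ++ w))]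
      rw [h1, List.drop_one]
      rfl
    show (ζ.1 (x :: (ζ.1.symm (ζ.1 [x] ++ w)).tail)).tail = w
    rw [← h2, Equiv.apply_symm_apply]
    obtain ⟨y, hy⟩ := List.length_eq_one_iff.mp hlen1
    rw [hy]
    rfl

lemma sec_mem (ζ : TreeAut) (x : Bool) : IsTreeAutFun ⇑(sec ζ x) := by
  constructor
  · intro v
    show ((ζ.1 (x :: v)).tail).length = v.length
    rw [List.length_tail, treeAut_len]
    rfl
  · intro v w
    show ((ζ.1 (x :: (v ++ w))).tail).take v.length = (ζ.1 (x :: v)).tail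
    have h1 : (ζ.1 ((x :: v) ++ w)).take (v.length + 1) = ζ.1 (x :: v) := by
      have h := (treeAut_fun ζ).2 (x :: v) w
      simpa using h
    have h2 := (List.take_append_drop (v.length + 1) (ζ.1 ((x :: v) ++ w))).symm
    rw [h1] at h2
    rw [← List.cons_append, h2]
    obtain ⟨y, l, hyl⟩ : ∃ y l, ζ.1 (x :: v) = y :: l := by
      cases hcase : ζ.1 (x :: v) with
      | nil =>
        exfalso
        have h := treeAut_len ζ (x :: v)
        rw [hcase] at h
        simp at h
      | cons y l => exact ⟨y, l, rfl⟩
    have hl : l.length = v.length := by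
      have h := treeAut_len ζ (x :: v)
      rw [hyl] at h
      simpa using h
    rw [hyl]
    simp only [List.cons_append, List.tail_cons]
    rw [← hl, List.take_left]

/-- The section of a tree automorphism at a first-level vertex, in `Ω`. -/
def secA (ζ : TreeAut) (x : Bool) : TreeAut := ⟨sec ζ x, sec_mem ζ x⟩

lemma apply_cons (ζ : TreeAut) (x : Bool) (v : Vertex) :
    ζ.1 (x :: v) = ζ.1 [x] ++ (sec ζ x) v := by
  conv_lhs => rw [← List.take_append_drop 1 (ζ.1 (x :: v)), treeAut_take, List.drop_one]
  rfl

lemma wr_apply_cons (a b : TreeAut) (t x : Bool) (v : Vertex) :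
    (wr a b t).1 (x :: v) = (xor x t) :: (cond x (b.1 v) (a.1 v)) := rfl

/-- Every tree automorphism decomposes by the wreath recursion. -/
lemma exists_wr (ζ : TreeAut) : ∃ a b : TreeAut, ∃ t : Bool, ζ = wr a b t := by
  have hl0 : (ζ.1 [false]).length = 1 := treeAut_len ζ [false]
  have hl1 : (ζ.1 [true]).length = 1 := treeAut_len ζ [true]
  obtain ⟨t, ht⟩ := List.length_eq_one_iff.mp hl0
  obtain ⟨s, hs⟩ := List.length_eq_one_iff.mp hl1
  have hst : s = !t := by
    have hne : s ≠ t := by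
      intro hEq
      have : ζ.1 [true] = ζ.1 [false] := by rw [ht, hs, hEq]
      have h2 := ζ.1.injective this
      simp at h2
    cases s <;> cases t <;> simp_all
  refine ⟨secA ζ false, secA ζ true, t, ?_⟩
  apply Subtype.ext
  apply Equiv.ext
  intro v
  cases v with
  | nil =>
    show ζ.1 [] = (wr (secA ζ false) (secA ζ true) t).1 []
    rw [treeAut_nil]
    rfl
  | cons x v =>
    show ζ.1 (x :: v) = (wr (secA ζ false) (secA ζ true) t).1 (x :: v)
    rw [apply_cons, wr_apply_cons]
    cases x
    · rw [ht]; cases t <;> rfl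
    · rw [hs, hst]; cases t <;> rfl

lemma wr_mul (a b c d : TreeAut) (t t' : Bool) :
    wr a b t * wr c d t' =
      wr ((cond t' b a) * c) ((cond t' a b) * d) (xor t t') := by
  apply Subtype.ext
  apply Equiv.ext
  intro v
  cases v with
  | nil => rfl
  | cons x v => cases x <;> cases t <;> cases t' <;> rfl

lemma wr_inj {a b a' b' : TreeAut} {t t' : Bool}
    (h : wr a b t = wr a' b' t') : a = a' ∧ b = b' := by
  have hf : ∀ v, (wr a b t).1 v = (wr a' b' t').1 v := fun v => by rw [h]
  constructor
  · apply Subtype.ext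
    apply Equiv.ext
    intro v
    have h0 := hf (false :: v)
    rw [wr_apply_cons, wr_apply_cons] at h0
    have h1 := congrArg List.tail h0
    simpa using h1
  · apply Subtype.ext
    apply Equiv.ext
    intro v
    have h0 := hf (true :: v)
    rw [wr_apply_cons, wr_apply_cons] at h0
    have h1 := congrArg List.tail h0
    simpa using h1

end Decomp

/-- `(γ₀,γ₁)σ` is conjugate to `(β₀,β₁)σ` in `Ω` iff `γ₀γ₁` is
conjugate to `β₀β₁` in `Ω`. -/
theorem conj_wr_swap_iff (γ₀ γ₁ β₀ β₁ : TreeAut) :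
    IsConj (wr γ₀ γ₁ true) (wr β₀ β₁ true) ↔ IsConj (γ₀ * γ₁) (β₀ * β₁) := by
  rw [isConj_iff, isConj_iff]
  constructor
  · rintro ⟨ζ, hζ⟩
    obtain ⟨a, b, t, he⟩ := exists_wr ζ
    have hc : wr a b t * wr γ₀ γ₁ true = wr β₀ β₁ true * (wr a b t) := by
      rw [← he, ← hζ]; group
    rw [wr_mul, wr_mul] at hc
    simp only [Bool.cond_true, Bool.cond_false] at hc
    cases t with
    | false =>
      simp only [Bool.cond_true, Bool.cond_false] at hc
      obtain ⟨h1, h2⟩ := wr_inj hc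
      refine ⟨b, ?_⟩
      rw [mul_inv_eq_iff_eq_mul]
      show b * (γ₀ * γ₁) = β₀ * β₁ * b
      rw [show β₀ * β₁ * b = β₀ * (β₁ * b) by group, ← h2,
        show β₀ * (a * γ₁) = (β₀ * a) * γ₁ by group, ← h1]
      group
    | true =>
      simp only [Bool.cond_true, Bool.cond_false] at hc
      obtain ⟨h1, h2⟩ := wr_inj hc
      -- h1 : b * γ₀ = β₁ * a, h2 : a * γ₁ = β₀ * b
      refine ⟨a * γ₁, ?_⟩
      rw [mul_inv_eq_iff_eq_mul]
      show a * γ₁ * (γ₀ * γ₁) = β₀ * β₁ * (a * γ₁)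
      rw [show β₀ * β₁ * (a * γ₁) = β₀ * (β₁ * a) * γ₁ by group, ← h1,
        show β₀ * (b * γ₀) * γ₁ = (β₀ * b) * (γ₀ * γ₁) by group, ← h2]
  · rintro ⟨c, hc0⟩
    have hc : c * (γ₀ * γ₁) = β₀ * β₁ * c := by rw [← hc0]; group
    refine ⟨wr (β₀⁻¹ * c * γ₀) c false, ?_⟩
    rw [mul_inv_eq_iff_eq_mul]
    show wr (β₀⁻¹ * c * γ₀) c false * wr γ₀ γ₁ true
        = wr β₀ β₁ true * wr (β₀⁻¹ * c * γ₀) c false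
    rw [wr_mul, wr_mul]
    simp only [Bool.cond_true, Bool.cond_false, Bool.xor_false, Bool.false_xor]
    have h1 : c * γ₀ = β₀ * (β₀⁻¹ * c * γ₀) := by group
    have h2 : β₀⁻¹ * c * γ₀ * γ₁ = β₁ * c := by
      rw [show β₀⁻¹ * c * γ₀ * γ₁ = β₀⁻¹ * (c * (γ₀ * γ₁)) by group, hc]
      group
    rw [h1, h2]

end BinTree
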